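/- Conservation equation for evolutionary systems (Theorem 4.2, regular-solution form): Suppose y : (0,∞) → H is locally Bochner square-integrable, y(t) ∈ D(A) for almost every t > 0 with t ↦ A y(t) locally Bochner square-integrable, and suppose there are a function z : (0,∞) → H and a locally Bochner square-integrable g : (0,∞) → H such that z(b) = z(a) + ∫_a^b g(t) dt for all 0 < a ≤ b, z(t) = P₀ y(t) for almost every t > 0, and M₀ g(t) + M₁ y(t) + A y(t) = 0 for almost every t > 0. Then for all 0 < a ≤ b one has ∫_a^b Re⟨y(t) | M₁ y(t)⟩_H dt = ½⟨z(a) | M₀ z(a)⟩_H − ½⟨z(b) | M₀ z(b)⟩_H. -/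

import Mathlib

open MeasureTheory
open scoped ComplexInnerProductSpace LinearPMap

/-- The orthogonal projection of `H` onto the closure of the range of a bounded operator
`M : H →L[ℂ] H`, viewed as a bounded operator on `H`. -/
noncomputable def rangeProj {H : Type*} [NormedAddCommGroup H] [InnerProductSpace ℂ H]
    [CompleteSpace H] (M : H →L[ℂ] H) : H →L[ℂ] H :=
  letI K := (LinearMap.range (M : H →ₗ[ℂ] H)).topologicalClosure
  haveI : CompleteSpace K := (Submodule.isClosed_topologicalClosure _).completeSpace_coe
  K.subtypeL.comp (K.orthogonalProjection)

section helpers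
variable {H : Type*} [NormedAddCommGroup H] [InnerProductSpace ℂ H] [CompleteSpace H]

omit [CompleteSpace H] in
lemma re_inner_symm' (x y : H) : (⟪x, y⟫).re = (⟪y, x⟫).re := by
  rw [← inner_conj_symm x y, Complex.conj_re]

lemma inner_sa (M0 : H →L[ℂ] H) (hM0 : IsSelfAdjoint M0) (x y : H) :
    ⟪M0 x, y⟫ = ⟪x, M0 y⟫ := by
  nth_rewrite 1 [← hM0.adjoint_eq]
  exact ContinuousLinearMap.adjoint_inner_left M0 y x

lemma skew_re (A : H →ₗ.[ℂ] H) (hdense : Dense (A.domain : Set H)) (hskew : A† = -A)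
    (u : A.domain) : (⟪(u : H), A u⟫).re = 0 := by
  have h := LinearPMap.adjoint_isFormalAdjoint hdense
  rw [hskew] at h
  have h2 := h u u
  rw [LinearPMap.neg_apply] at h2
  have h3 : (⟪(u:H), A u⟫ : ℂ) = - (starRingEnd ℂ) (⟪(u:H), A u⟫ : ℂ) := by
    rw [inner_conj_symm, ← h2, inner_neg_left]
  have h4 : (⟪(u:H), A u⟫).re = - (⟪(u:H), A u⟫).re := by
    conv_lhs => rw [h3]
    rw [Complex.neg_re, Complex.conj_re]
  linarith

lemma M0_rangeProj (M0 : H →L[ℂ] H) (hM0 : IsSelfAdjoint M0) (x : H) :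
    M0 (rangeProj M0 x) = M0 x := by
  set K := (LinearMap.range (M0 : H →ₗ[ℂ] H)).topologicalClosure with hK
  haveI : CompleteSpace K := (Submodule.isClosed_topologicalClosure _).completeSpace_coe
  have hPx : rangeProj M0 x = (K.orthogonalProjection x : H) := rfl
  set v := x - (K.orthogonalProjection x : H) with hv
  have hvK : v ∈ Kᗮ := K.sub_starProjection_mem_orthogonal x
  have hMv : M0 v = 0 := by
    have h1 : (⟪M0 v, M0 v⟫ : ℂ) = 0 := by
      rw [inner_sa M0 hM0]
      refine (Submodule.mem_orthogonal' K v).mp hvK _ ?_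
      exact Submodule.le_topologicalClosure _ ⟨M0 v, rfl⟩
    exact inner_self_eq_zero.mp h1
  have h2 : M0 x = M0 (rangeProj M0 x) + M0 v := by
    rw [hPx, ← map_add, hv]
    congr 1
    abel
  rw [h2, hMv, add_zero]

/-- The real-linear continuous functional `u ↦ Re⟪w, u⟫`. -/
noncomputable def Lre (w : H) : H →L[ℝ] ℝ :=
  Complex.reCLM.comp ((innerSL ℂ w).restrictScalars ℝ)

omit [CompleteSpace H] in
@[simp] lemma Lre_apply (w u : H) : Lre w u = (⟪w, u⟫).re := rfl

end helpers

section keyB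
variable {H : Type*} [NormedAddCommGroup H] [InnerProductSpace ℂ H] [CompleteSpace H]

lemma keyB (M0 : H →L[ℂ] H) (hM0 : IsSelfAdjoint M0) {a b : ℝ} (hab : a ≤ b)
    {g : ℝ → H} (hg : Integrable g (volume.restrict (Set.Ioc a b))) :
    Integrable (fun t => (⟪M0 (g t), ∫ s in Set.Ioc a t, g s⟫).re)
      (volume.restrict (Set.Ioc a b)) ∧
    2 * ∫ t in Set.Ioc a b, (⟪M0 (g t), ∫ s in Set.Ioc a t, g s⟫).re
      = (⟪M0 (∫ s in Set.Ioc a b, g s), ∫ s in Set.Ioc a b, g s⟫).re := by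
  set μ := volume.restrict (Set.Ioc a b) with hμ
  haveI : IsFiniteMeasure μ := by
    constructor
    rw [hμ, Measure.restrict_apply_univ]
    exact measure_Ioc_lt_top
  set F : ℝ × ℝ → ℝ := fun p => (⟪M0 (g p.2), g p.1⟫).re with hF
  have hgm : AEStronglyMeasurable g μ := hg.aestronglyMeasurable
  -- measurability of F on the product
  have hFm : AEStronglyMeasurable F (μ.prod μ) := by
    have hc : Continuous (fun q : H × H => (⟪M0 q.2, q.1⟫).re) :=
      Complex.continuous_re.comp ((M0.continuous.comp continuous_snd).inner continuous_fst)
    exact hc.comp_aestronglyMeasurable (hgm.comp_fst.prodMk hgm.comp_snd)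
  have hFsymm : ∀ p : ℝ × ℝ, F p.swap = F p := by
    intro p
    simp only [hF, Prod.fst_swap, Prod.snd_swap]
    rw [inner_sa M0 hM0, re_inner_symm']
  have hFbound : ∀ p : ℝ × ℝ, ‖F p‖ ≤ ‖g p.1‖ * (‖M0‖ * ‖g p.2‖) := by
    intro p
    calc ‖F p‖ ≤ ‖(⟪M0 (g p.2), g p.1⟫ : ℂ)‖ := by
          simpa using Complex.abs_re_le_norm (⟪M0 (g p.2), g p.1⟫ : ℂ)
      _ ≤ ‖M0 (g p.2)‖ * ‖g p.1‖ := norm_inner_le_norm _ _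
      _ ≤ (‖M0‖ * ‖g p.2‖) * ‖g p.1‖ := by
          gcongr
          exact M0.le_opNorm _
      _ = ‖g p.1‖ * (‖M0‖ * ‖g p.2‖) := by ring
  have hbound : Integrable (fun p : ℝ × ℝ => ‖g p.1‖ * (‖M0‖ * ‖g p.2‖)) (μ.prod μ) :=
    hg.norm.mul_prod (hg.norm.const_mul ‖M0‖)
  set S : Set (ℝ × ℝ) := {p | p.1 ≤ p.2} with hS
  have hSm : MeasurableSet S := (isClosed_le continuous_fst continuous_snd).measurableSet
  set S' : Set (ℝ × ℝ) := {p | p.2 ≤ p.1} with hS'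
  have hS'm : MeasurableSet S' := (isClosed_le continuous_snd continuous_fst).measurableSet
  set Φ := S.indicator F with hΦ
  set Ψ := S'.indicator F with hΨ
  have hind_le : ∀ (T : Set (ℝ × ℝ)) p, ‖T.indicator F p‖ ≤ ‖g p.1‖ * (‖M0‖ * ‖g p.2‖) := by
    intro T p
    exact le_trans (norm_indicator_le_norm_self (s := T) (f := F) (a := p)) (hFbound p)
  have hΦint : Integrable Φ (μ.prod μ) :=
    Integrable.mono' hbound (hFm.indicator hSm) (Filter.Eventually.of_forall (hind_le S))
  have hΨint : Integrable Ψ (μ.prod μ) :=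
    Integrable.mono' hbound (hFm.indicator hS'm) (Filter.Eventually.of_forall (hind_le S'))
  have hFint : Integrable F (μ.prod μ) :=
    Integrable.mono' hbound hFm (Filter.Eventually.of_forall hFbound)
  -- diagonal is null
  have hdiag : (μ.prod μ) {p : ℝ × ℝ | p.1 = p.2} = 0 := by
    have hDm : MeasurableSet {p : ℝ × ℝ | p.1 = p.2} :=
      (isClosed_eq continuous_fst continuous_snd).measurableSet
    rw [Measure.measure_prod_null hDm]
    filter_upwards with x
    have : (Prod.mk x ⁻¹' {p : ℝ × ℝ | p.1 = p.2}) = {x} := by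
      ext u; simp [eq_comm]
    rw [this]
    exact measure_singleton x
  -- a.e. Φ + Ψ = F
  have hae : (fun p => Φ p + Ψ p) =ᵐ[μ.prod μ] F := by
    rw [Filter.eventuallyEq_iff_exists_mem]
    refine ⟨{p : ℝ × ℝ | p.1 = p.2}ᶜ, ?_, ?_⟩
    · rw [mem_ae_iff, compl_compl]; exact hdiag
    · intro p hp
      have hne : ¬ p.1 = p.2 := hp
      rcases lt_or_gt_of_ne hne with h | h
      · have h1 : p ∈ S := le_of_lt h
        have h2 : p ∉ S' := by simp only [hS', Set.mem_setOf_eq]; exact not_le.mpr h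
        simp [hΦ, hΨ, Set.indicator_of_mem h1, Set.indicator_of_notMem h2]
      · have h1 : p ∉ S := by simp only [hS, Set.mem_setOf_eq]; exact not_le.mpr h
        have h2 : p ∈ S' := le_of_lt h
        simp [hΦ, hΨ, Set.indicator_of_mem h2, Set.indicator_of_notMem h1]
  have hsum : (∫ p, Φ p ∂(μ.prod μ)) + (∫ p, Ψ p ∂(μ.prod μ)) = ∫ p, F p ∂(μ.prod μ) := by
    rw [← integral_add hΦint hΨint]
    exact integral_congr_ae hae
  -- swap symmetry : ∫ Ψ = ∫ Φ
  have hswap : (∫ p, Ψ p ∂(μ.prod μ)) = ∫ p, Φ p ∂(μ.prod μ) := by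
    have h1 : ∀ p : ℝ × ℝ, Φ p.swap = Ψ p := by
      intro p
      simp only [hΦ, hΨ, Set.indicator_apply]
      have : p.swap ∈ S ↔ p ∈ S' := Iff.rfl
      rw [if_congr this (by rw [hFsymm]) rfl]
    calc (∫ p, Ψ p ∂(μ.prod μ)) = ∫ p, Φ p.swap ∂(μ.prod μ) := by
          simp only [h1]
      _ = ∫ p, Φ p ∂(μ.prod μ) := integral_prod_swap Φ
  have h2Φ : 2 * (∫ p, Φ p ∂(μ.prod μ)) = ∫ p, F p ∂(μ.prod μ) := by
    rw [← hsum, hswap]; ring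
  -- compute ∫ F
  set Zb : H := ∫ s in Set.Ioc a b, g s with hZb
  have hFtot : (∫ p, F p ∂(μ.prod μ)) = (⟪M0 Zb, Zb⟫).re := by
    rw [integral_prod_symm F hFint]
    have hinner : ∀ t : ℝ, (∫ s, F (s, t) ∂μ) = Lre (M0 Zb) (g t) := by
      intro t
      have : (∫ s, F (s, t) ∂μ) = Lre (M0 (g t)) (∫ s, g s ∂μ) := by
        rw [← ContinuousLinearMap.integral_comp_comm (Lre (M0 (g t))) hg]
        rfl
      rw [this]
      simp only [Lre_apply]
      rw [inner_sa M0 hM0, re_inner_symm']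
    calc (∫ t, ∫ s, F (s, t) ∂μ ∂μ) = ∫ t, Lre (M0 Zb) (g t) ∂μ := by
          simp only [hinner]
      _ = Lre (M0 Zb) (∫ t, g t ∂μ) := ContinuousLinearMap.integral_comp_comm _ hg
      _ = (⟪M0 Zb, Zb⟫).re := rfl
  -- compute inner integral of Φ
  have hinnerΦ : ∀ t ∈ Set.Ioc a b,
      (∫ s, Φ (s, t) ∂μ) = (⟪M0 (g t), ∫ s in Set.Ioc a t, g s⟫).re := by
    intro t ht
    have hgt : Integrable g (volume.restrict (Set.Ioc a t)) :=
      hg.mono_measure (Measure.restrict_mono (Set.Ioc_subset_Ioc le_rfl ht.2) le_rfl)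
    have e1 : ∀ s : ℝ, Φ (s, t) = (Set.Iic t).indicator (fun s => F (s, t)) s := by
      intro s
      simp only [hΦ, Set.indicator_apply, hS, Set.mem_setOf_eq, Set.mem_Iic]
    have e2 : μ.restrict (Set.Iic t) = volume.restrict (Set.Ioc a t) := by
      rw [hμ, Measure.restrict_restrict measurableSet_Iic]
      congr 1
      ext s
      simp only [Set.mem_inter_iff, Set.mem_Iic, Set.mem_Ioc]
      constructor
      · rintro ⟨h1, h2, h3⟩; exact ⟨h2, h1⟩
      · rintro ⟨h1, h2⟩; exact ⟨h2, h1, h2.trans ht.2⟩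
    calc (∫ s, Φ (s, t) ∂μ) = ∫ s, (Set.Iic t).indicator (fun s => F (s, t)) s ∂μ := by
          simp only [e1]
      _ = ∫ s in Set.Iic t, F (s, t) ∂μ := integral_indicator measurableSet_Iic
      _ = ∫ s in Set.Ioc a t, F (s, t) := by rw [e2]
      _ = ∫ s in Set.Ioc a t, Lre (M0 (g t)) (g s) := rfl
      _ = Lre (M0 (g t)) (∫ s in Set.Ioc a t, g s) :=
          ContinuousLinearMap.integral_comp_comm _ hgt
      _ = (⟪M0 (g t), ∫ s in Set.Ioc a t, g s⟫).re := rfl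
  have haeΦ : (fun t => ∫ s, Φ (s, t) ∂μ)
      =ᵐ[μ] (fun t => (⟪M0 (g t), ∫ s in Set.Ioc a t, g s⟫).re) := by
    filter_upwards [ae_restrict_mem measurableSet_Ioc] with t ht
    exact hinnerΦ t ht
  constructor
  · exact (hΦint.integral_prod_right).congr haeΦ
  · have : (∫ t in Set.Ioc a b, (⟪M0 (g t), ∫ s in Set.Ioc a t, g s⟫).re)
        = ∫ p, Φ p ∂(μ.prod μ) := by
      rw [integral_prod_symm Φ hΦint]
      exact (integral_congr_ae haeΦ).symm
    rw [this, h2Φ, hFtot]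

end keyB

/-- **Conservation equation for evolutionary systems** (regular-solution form).
Let `H` be a complex Hilbert space, `M₀` bounded selfadjoint, `M₁` bounded, `A` densely
defined and skew-selfadjoint, and `P₀` the orthogonal projection onto the closure of the
range of `M₀`.  Suppose `y : (0,∞) → H` is locally Bochner square-integrable, takes values
in `D(A)` a.e. with `t ↦ A y(t)` locally square-integrable, and there are `z` and a locally
square-integrable `g` with `z(b) = z(a) + ∫_a^b g` for `0 < a ≤ b`, `z = P₀ y` a.e. and
`M₀ g(t) + M₁ y(t) + A y(t) = 0` a.e. on `(0,∞)`.  Then for all `0 < a ≤ b`,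
`∫_a^b Re⟨y(t)|M₁ y(t)⟩ dt = ½⟨z(a)|M₀ z(a)⟩ − ½⟨z(b)|M₀ z(b)⟩`. -/
theorem stmt0
    {H : Type*} [NormedAddCommGroup H] [InnerProductSpace ℂ H] [CompleteSpace H]
    (M0 M1 : H →L[ℂ] H) (hM0 : IsSelfAdjoint M0)
    (A : H →ₗ.[ℂ] H) (hdense : Dense (A.domain : Set H)) (hskew : A† = -A)
    (y z g Ay : ℝ → H)
    (hy2 : ∀ a b : ℝ, 0 < a → a ≤ b → MemLp y 2 (volume.restrict (Set.Ioc a b)))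
    (hg2 : ∀ a b : ℝ, 0 < a → a ≤ b → MemLp g 2 (volume.restrict (Set.Ioc a b)))
    (hAy2 : ∀ a b : ℝ, 0 < a → a ≤ b → MemLp Ay 2 (volume.restrict (Set.Ioc a b)))
    (hyA : ∀ᵐ t ∂(volume.restrict (Set.Ioi (0 : ℝ))),
      ∃ h : y t ∈ A.domain, A ⟨y t, h⟩ = Ay t)
    (hzg : ∀ a b : ℝ, 0 < a → a ≤ b → z b = z a + ∫ t in a..b, g t)
    (hzy : ∀ᵐ t ∂(volume.restrict (Set.Ioi (0 : ℝ))), z t = rangeProj M0 (y t))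
    (heq : ∀ᵐ t ∂(volume.restrict (Set.Ioi (0 : ℝ))),
      M0 (g t) + M1 (y t) + Ay t = 0) :
    ∀ a b : ℝ, 0 < a → a ≤ b →
      (∫ t in a..b, (⟪y t, M1 (y t)⟫).re)
        = 1 / 2 * (⟪z a, M0 (z a)⟫).re - 1 / 2 * (⟪z b, M0 (z b)⟫).re := by
  intro a b ha hab
  set μ := volume.restrict (Set.Ioc a b) with hμ
  haveI : IsFiniteMeasure μ := by
    constructor
    rw [hμ, Measure.restrict_apply_univ]
    exact measure_Ioc_lt_top
  have hsub : Set.Ioc a b ⊆ Set.Ioi (0:ℝ) := fun x hx => ha.trans hx.1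
  have hg1 : Integrable g μ := (hg2 a b ha hab).integrable one_le_two
  obtain ⟨hint, hkey⟩ := keyB M0 hM0 hab hg1
  set Zb : H := ∫ s in Set.Ioc a b, g s with hZb
  -- pointwise a.e. identity
  have haeq : ∀ᵐ t ∂μ, (⟪y t, M1 (y t)⟫).re
      = -(Lre (M0 (z a)) (g t)) - (⟪M0 (g t), ∫ s in Set.Ioc a t, g s⟫).re := by
    have h1 := ae_restrict_of_ae_restrict_of_subset hsub heq
    have h2 := ae_restrict_of_ae_restrict_of_subset hsub hzy
    have h3 := ae_restrict_of_ae_restrict_of_subset hsub hyA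
    filter_upwards [h1, h2, h3, ae_restrict_mem measurableSet_Ioc] with t ht1 ht2 ht3 ht4
    obtain ⟨hmem, hAyt⟩ := ht3
    have hskew0 : (⟪y t, Ay t⟫).re = 0 := by
      rw [← hAyt]; exact skew_re A hdense hskew ⟨y t, hmem⟩
    have hM1 : M1 (y t) = -M0 (g t) - Ay t := by
      calc M1 (y t) = (M0 (g t) + M1 (y t) + Ay t) - M0 (g t) - Ay t := by abel
        _ = -M0 (g t) - Ay t := by rw [ht1]; abel
    have hzt : z t = z a + ∫ s in Set.Ioc a t, g s := by
      rw [hzg a t ha (le_of_lt ht4.1), intervalIntegral.integral_of_le (le_of_lt ht4.1)]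
    have hM0y : ⟪y t, M0 (g t)⟫ = ⟪M0 (z a), g t⟫ + ⟪M0 (∫ s in Set.Ioc a t, g s), g t⟫ := by
      rw [← inner_sa M0 hM0]
      rw [show M0 (y t) = M0 (z t) from by rw [ht2, M0_rangeProj M0 hM0]]
      rw [hzt, map_add, inner_add_left]
    have step : (⟪y t, M1 (y t)⟫ : ℂ) = -⟪y t, M0 (g t)⟫ - ⟪y t, Ay t⟫ := by
      rw [hM1, inner_sub_right, inner_neg_right]
    rw [step, Complex.sub_re, Complex.neg_re, hskew0, sub_zero, hM0y, Complex.add_re]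
    have e1 : (⟪M0 (z a), g t⟫).re = Lre (M0 (z a)) (g t) := rfl
    have e2 : (⟪M0 (∫ s in Set.Ioc a t, g s), g t⟫).re
        = (⟪M0 (g t), ∫ s in Set.Ioc a t, g s⟫).re := by
      rw [inner_sa M0 hM0, re_inner_symm']
    rw [e1, e2]
    ring
  -- integrate
  have hLint : Integrable (fun t => Lre (M0 (z a)) (g t)) μ :=
    (Lre (M0 (z a))).integrable_comp hg1
  have hLHS : (∫ t in a..b, (⟪y t, M1 (y t)⟫).re)
      = -(Lre (M0 (z a)) Zb) - ∫ t, (⟪M0 (g t), ∫ s in Set.Ioc a t, g s⟫).re ∂μ := by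
    rw [intervalIntegral.integral_of_le hab]
    calc (∫ t in Set.Ioc a b, (⟪y t, M1 (y t)⟫).re)
        = ∫ t, (-(Lre (M0 (z a)) (g t))
            - (⟪M0 (g t), ∫ s in Set.Ioc a t, g s⟫).re) ∂μ := integral_congr_ae haeq
      _ = (∫ t, -(Lre (M0 (z a)) (g t)) ∂μ)
            - ∫ t, (⟪M0 (g t), ∫ s in Set.Ioc a t, g s⟫).re ∂μ :=
          integral_sub hLint.neg hint
      _ = -(Lre (M0 (z a)) Zb) - ∫ t, (⟪M0 (g t), ∫ s in Set.Ioc a t, g s⟫).re ∂μ := by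
          rw [integral_neg, ContinuousLinearMap.integral_comp_comm _ hg1]
  -- expand the right-hand side
  have hzb2 : z b = z a + Zb := by
    rw [hzg a b ha hab, intervalIntegral.integral_of_le hab]
  have hexp : (⟪z b, M0 (z b)⟫).re = (⟪z a, M0 (z a)⟫).re
      + 2*(⟪M0 (z a), Zb⟫).re + (⟪M0 Zb, Zb⟫).re := by
    rw [hzb2, map_add, inner_add_left, inner_add_right, inner_add_right]
    simp only [Complex.add_re]
    have e1 : (⟪z a, M0 Zb⟫).re = (⟪M0 (z a), Zb⟫).re := by rw [inner_sa M0 hM0]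
    have e2 : (⟪Zb, M0 (z a)⟫).re = (⟪M0 (z a), Zb⟫).re := re_inner_symm' Zb (M0 (z a))
    have e3 : (⟪Zb, M0 Zb⟫).re = (⟪M0 Zb, Zb⟫).re := re_inner_symm' Zb (M0 Zb)
    rw [e1, e2, e3]; ring
  rw [hLHS, hexp]
  have eL : Lre (M0 (z a)) Zb = (⟪M0 (z a), Zb⟫).re := rfl
  rw [eL]
  linarith [hkey]
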